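/- Let B = (G, P, ι) be an acyclic generalized Bayesian network whose initial distribution ι is a product distribution (i.e., the initial nodes are mutually independent under ι, so B is a classical Bayesian network). Then every d-separation triple of G is an independence of the standard BN semantics: d-sep(G) ⊆ Indep(dist_BN(B)). -/

import Mathlib

open Filter
open scoped Classical

noncomputable section

namespace GBNPaper

variable {V : Type} [Fintype V] [DecidableEq V]

/-- A distribution over a finite type: nonnegative values summing to one. -/
def IsDist {α : Type} [Fintype α] (μ : α → ℝ) : Prop :=
  (∀ a, 0 ≤ μ a) ∧ ∑ a, μ a = 1

/-- The set of parents of a node `X` w.r.t. an edge set `E`. -/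
def Pre (E : Finset (V × V)) (X : V) : Finset V :=
  (E.filter fun e => e.2 = X).image Prod.fst

/-- The set of initial (parentless) nodes. -/
def InitSet (E : Finset (V × V)) : Finset V :=
  Finset.univ.filter fun X => Pre E X = ∅

/-- Assignments over a subset `U` of the nodes. -/
abbrev Asg (U : Finset V) : Type := {x // x ∈ U} → Bool

/-- A full assignment `b` agrees with a partial assignment `d` on `U`. -/
abbrev Agrees (b : V → Bool) (U : Finset V) (d : Asg U) : Prop :=
  ∀ x : {x // x ∈ U}, b x.1 = d x

/-- A generalized Bayesian network over node set `V`. -/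
structure GBN (V : Type) [Fintype V] [DecidableEq V] where
  /-- the directed edges -/
  edges : Finset (V × V)
  /-- CPT entries: the probability of `X = T` given an assignment of the parents of `X` -/
  cpt : (X : V) → Asg (Pre edges X) → ℝ
  cpt_nonneg : ∀ X b, 0 ≤ cpt X b
  cpt_le_one : ∀ X b, cpt X b ≤ 1
  /-- the initial distribution over assignments of the initial nodes -/
  ι : Asg (InitSet edges) → ℝ
  ι_dist : IsDist ι

/-- Probability of an event (set of full assignments) under `μ`. -/
def probIf (μ : (V → Bool) → ℝ) (p : (V → Bool) → Prop) : ℝ :=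
  ∑ b : V → Bool, if p b then μ b else 0

/-- The marginal distribution of `μ` on `U`. -/
def marginal (μ : (V → Bool) → ℝ) (U : Finset V) : Asg U → ℝ :=
  fun d => probIf μ fun b => Agrees b U d

/-- `Pr(X = v | parents as given by b)`. -/
def copyProb (B : GBN V) (X : V) (v : Bool) (b : V → Bool) : ℝ :=
  if v then B.cpt X (fun p => b p.1) else 1 - B.cpt X (fun p => b p.1)

/-- The standard BN semantics (chain rule) of a GBN. -/
def distBN (B : GBN V) (b : V → Bool) : ℝ :=
  B.ι (fun x => b x.1) *
    ∏ X ∈ Finset.univ \ InitSet B.edges, copyProb B X (b X) b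

/-- The edge set contains no directed cycle. -/
def Acyclic (E : Finset (V × V)) : Prop :=
  ∀ x : V, ¬ Relation.TransGen (fun a b => (a, b) ∈ E) x x

/-- `C` is a cutset: every directed cycle contains a node of `C`. -/
def IsCutset (E : Finset (V × V)) (C : Finset V) : Prop :=
  ∀ x : V, ¬ Relation.TransGen (fun a b => (a, b) ∈ E ∧ a ∉ C ∧ b ∉ C) x x

/-- The standard BN semantics of the `C`-dissected GBN `B↑C↑γ`, as a joint
distribution over assignments of the original nodes `V` together with
assignments of the copies `C'` of the cutset nodes. -/
def distDissect (B : GBN V) (C : Finset V) (γ : Asg C → ℝ)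
    (b : V → Bool) (c : Asg C) : ℝ :=
  B.ι (fun x => b x.1) * γ (fun x => b x.1) *
    (∏ X ∈ (Finset.univ \ InitSet B.edges) \ C, copyProb B X (b X) b) *
    ∏ Y ∈ C.attach, copyProb B Y.1 (c Y) b

/-- `Next(B,C,γ)`: restrict `dist_BN(B↑C↑γ)` to `(V∖C) ∪ C'` and re-identify
the copies with the original cutset nodes. -/
def Next (B : GBN V) (C : Finset V) (γ : Asg C → ℝ) (a : V → Bool) : ℝ :=
  ∑ b : V → Bool,
    if ∀ x : V, x ∉ C → b x = a x then distDissect B C γ b (fun y => a y.1) else 0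

/-- `Extend(B,C,γ) = dist_BN(B↑C↑γ)|_V`. -/
def Extend (B : GBN V) (C : Finset V) (γ : Asg C → ℝ) (a : V → Bool) : ℝ :=
  ∑ c : Asg C, distDissect B C γ a c

/-- Dirac (point) distribution. -/
def DiracD {α : Type} [DecidableEq α] (b : α) : α → ℝ := fun c => if c = b then 1 else 0

/-- Transition matrix of the cutset Markov chain `M_{B↑C}`:
`P(b,c) = Next(B,C,Dirac(b))|_C (c)`. -/
def cutsetP (B : GBN V) (C : Finset V) (b c : Asg C) : ℝ :=
  marginal (Next B C (DiracD b)) C c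

/-- Vector-matrix multiplication `γ·P`. -/
def vecMul {α : Type} [Fintype α] (γ : α → ℝ) (P : α → α → ℝ) : α → ℝ :=
  fun c => ∑ b, γ b * P b c

/-- The transient distributions `γ0·P^n`. -/
def matIter {α : Type} [Fintype α] (P : α → α → ℝ) (γ0 : α → ℝ) : ℕ → (α → ℝ)
  | 0 => γ0
  | n + 1 => vecMul (matIter P γ0 n) P

/-- The sequence `γ_{n+1} = Next(B,C,γ_n)|_C`. -/
def nextSeq (B : GBN V) (C : Finset V) (γ0 : Asg C → ℝ) : ℕ → (Asg C → ℝ)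
  | 0 => γ0
  | n + 1 => marginal (Next B C (nextSeq B C γ0 n)) C

/-- Cesàro averages of a sequence of vectors. -/
def cesaro {α : Type} (f : ℕ → α → ℝ) (n : ℕ) : α → ℝ :=
  fun a => (∑ i ∈ Finset.range (n + 1), f i a) / (n + 1)

/-- The Markov chain semantics `[B]_{MC-C}`: image of
`γ0 ↦ Extend(B,C,lrf^{γ0})` over all initial cutset distributions `γ0`,
where `lrf^{γ0}` is the Cesàro limit of the transient distributions. -/
def MCSem (B : GBN V) (C : Finset V) : Set ((V → Bool) → ℝ) :=
  { μ | ∃ γ0 γ, IsDist γ0 ∧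
      Tendsto (cesaro (matIter (cutsetP B C) γ0)) atTop (nhds γ) ∧
      μ = Extend B C γ }

/-- The limit semantics `[B]_{Lim-C}`. -/
def LimSem (B : GBN V) (C : Finset V) : Set ((V → Bool) → ℝ) :=
  { μ | ∃ γ0 γ, IsDist γ0 ∧
      Tendsto (nextSeq B C γ0) atTop (nhds γ) ∧
      μ = Extend B C γ }

/-- The limit average semantics `[B]_{LimAvg-C}`. -/
def LimAvgSem (B : GBN V) (C : Finset V) : Set ((V → Bool) → ℝ) :=
  { μ | ∃ γ0 γ, IsDist γ0 ∧
      Tendsto (cesaro (nextSeq B C γ0)) atTop (nhds γ) ∧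
      μ = Extend B C γ }

/-- The Markov chain semantics in stationary-distribution form:
`{ Extend(B,C,γ) : γ a distribution with γ = γ·P }`. -/
def MCStatSem (B : GBN V) (C : Finset V) : Set ((V → Bool) → ℝ) :=
  { μ | ∃ γ : Asg C → ℝ, IsDist γ ∧ γ = vecMul γ (cutsetP B C) ∧ μ = Extend B C γ }

/-- Strong CPT-consistency of `μ` for node `X`. -/
def StrongCPT (B : GBN V) (μ : (V → Bool) → ℝ) (X : V) : Prop :=
  ∀ c : Asg (Pre B.edges X),
    probIf μ (fun f => f X = true ∧ Agrees f (Pre B.edges X) c) =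
      probIf μ (fun f => Agrees f (Pre B.edges X) c) * B.cpt X c

/-- Weak CPT-consistency of `μ` for node `X`. -/
def WeakCPT (B : GBN V) (μ : (V → Bool) → ℝ) (X : V) : Prop :=
  probIf μ (fun f => f X = true) =
    ∑ c : Asg (Pre B.edges X),
      probIf μ (fun f => Agrees f (Pre B.edges X) c) * B.cpt X c

/-- The CPT semantics `[B]_{Cpt}`. -/
def CptSem (B : GBN V) : Set ((V → Bool) → ℝ) :=
  { μ | IsDist μ ∧ marginal μ (InitSet B.edges) = B.ι ∧
      ∀ X, X ∉ InitSet B.edges → StrongCPT B μ X }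

/-- `(X ⊥ Y | Z) ∈ Indep(μ)`. -/
def IndepTriple (μ : (V → Bool) → ℝ) (X Y Z : Finset V) : Prop :=
  ∀ (a : Asg X) (b : Asg Y) (c : Asg Z),
    probIf μ (fun f => Agrees f Y b ∧ Agrees f Z c) = 0 ∨
    probIf μ (fun f => Agrees f X a ∧ Agrees f Y b ∧ Agrees f Z c) /
        probIf μ (fun f => Agrees f Y b ∧ Agrees f Z c) =
      probIf μ (fun f => Agrees f X a ∧ Agrees f Z c) /
        probIf μ (fun f => Agrees f Z c)

def PairwiseDisjoint3 (X Y Z : Finset V) : Prop :=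
  Disjoint X Y ∧ Disjoint X Z ∧ Disjoint Y Z

/-- `Indep(μ)` as a set of triples. -/
def IndepSet (μ : (V → Bool) → ℝ) : Set (Finset V × Finset V × Finset V) :=
  { t | PairwiseDisjoint3 t.1 t.2.1 t.2.2 ∧ IndepTriple μ t.1 t.2.1 t.2.2 }

/-- The CPT-I semantics `[B]_{Cpt-I}`. -/
def CptISem (B : GBN V) (I : Set (Finset V × Finset V × Finset V)) :
    Set ((V → Bool) → ℝ) :=
  { μ | μ ∈ CptSem B ∧ I ⊆ IndepSet μ }

/-! d-separation -/

def Adjacent (E : Finset (V × V)) (x y : V) : Prop := (x, y) ∈ E ∨ (y, x) ∈ E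

/-- Reachability along directed edges (including the node itself). -/
def Reaches (E : Finset (V × V)) (x y : V) : Prop :=
  Relation.ReflTransGen (fun a b => (a, b) ∈ E) x y

/-- An intermediate triple `a, w, b` on a path blocks it given `Z`:
either `w ∈ Z` and `w` lies in a chain or a fork, or `w` lies in a collider
and no node reachable from `w` (including `w`) is in `Z`. -/
def BlockedTriple (E : Finset (V × V)) (Z : Finset V) (a w b : V) : Prop :=
  (w ∈ Z ∧ (((a, w) ∈ E ∧ (w, b) ∈ E) ∨ ((b, w) ∈ E ∧ (w, a) ∈ E) ∨
      ((w, a) ∈ E ∧ (w, b) ∈ E))) ∨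
  ((a, w) ∈ E ∧ (b, w) ∈ E ∧ ∀ d, Reaches E w d → d ∉ Z)

/-- A path (as a list of nodes) is blocked given `Z`. -/
def Blocked (E : Finset (V × V)) (Z : Finset V) (W : List V) : Prop :=
  ∃ l₁ a w b l₂, W = l₁ ++ a :: w :: b :: l₂ ∧ BlockedTriple E Z a w b

/-- `x` and `y` are d-separated given `Z`: every undirected simple path
from `x` to `y` is blocked given `Z`. -/
def DSepNodes (E : Finset (V × V)) (x y : V) (Z : Finset V) : Prop :=
  ∀ W : List V, W.Chain' (Adjacent E) → W.Nodup →
    W.head? = some x → W.getLast? = some y → Blocked E Z W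

def DSep (E : Finset (V × V)) (X Y Z : Finset V) : Prop :=
  ∀ x ∈ X, ∀ y ∈ Y, DSepNodes E x y Z

/-- `d-sep(G)` as a set of triples of pairwise disjoint node sets. -/
def DSepSet (E : Finset (V × V)) : Set (Finset V × Finset V × Finset V) :=
  { t | PairwiseDisjoint3 t.1 t.2.1 t.2.2 ∧ DSep E t.1 t.2.1 t.2.2 }

/-- `Close(G)`: add an edge between every ordered pair of distinct initial nodes. -/
def Close (E : Finset (V × V)) : Finset (V × V) :=
  E ∪ ((InitSet E ×ˢ InitSet E).filter fun p => p.1 ≠ p.2)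

/-- `G[C]`: remove all edges into nodes of `C` (so the nodes of `C` are initial). -/
def CutGraph (E : Finset (V × V)) (C : Finset V) : Finset (V × V) :=
  E.filter fun e => e.2 ∉ C

/-- `ι` is a product distribution: it factorizes into its single-node marginals,
i.e. the initial nodes are mutually independent under `ι`. -/
def IsProductDist {U : Finset V} (ι : Asg U → ℝ) : Prop :=
  ∀ b : Asg U,
    ι b = ∏ x : {x // x ∈ U}, ∑ b' : Asg U, if b' x = b x then ι b' else 0

/-! Markov chain notions -/

/-- Reachability in the underlying graph of a DTMC. -/
def MCReach {α : Type} (P : α → α → ℝ) (x y : α) : Prop :=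
  Relation.ReflTransGen (fun a b => 0 < P a b) x y

/-- Bottom strongly connected component of a DTMC: nonempty, closed under
reachability, and strongly connected. -/
def IsBSCC {α : Type} (P : α → α → ℝ) (D : Set α) : Prop :=
  D.Nonempty ∧ (∀ x ∈ D, ∀ y, MCReach P x y → y ∈ D) ∧
    ∀ x ∈ D, ∀ y ∈ D, MCReach P x y

/-- Walks of a given length along positive-probability transitions. -/
def walkLen {α : Type} (P : α → α → ℝ) : ℕ → α → α → Prop
  | 0, x, y => x = y
  | n + 1, x, y => ∃ z, 0 < P x z ∧ walkLen P n z y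

/-- The lengths of the cycles of `D`. -/
def CycleLens {α : Type} (P : α → α → ℝ) (D : Set α) : Set ℕ :=
  { n | 0 < n ∧ ∃ x ∈ D, walkLen P n x x }

/-- `D` is aperiodic: the gcd of the lengths of its cycles equals 1. -/
def AperiodicBSCC {α : Type} (P : α → α → ℝ) (D : Set α) : Prop :=
  ∀ d : ℕ, (∀ n ∈ CycleLens P D, d ∣ n) → d = 1

/-- `D` is periodic: the gcd of the lengths of its cycles is greater than 1. -/
def PeriodicBSCC {α : Type} (P : α → α → ℝ) (D : Set α) : Prop :=
  ∃ d : ℕ, 1 < d ∧ ∀ n ∈ CycleLens P D, d ∣ n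

/-- A GBN is smooth if all CPT entries and all values of `ι` lie in `(0,1)`. -/
def Smooth (B : GBN V) : Prop :=
  (∀ X b, B.cpt X b ∈ Set.Ioo (0 : ℝ) 1) ∧ ∀ d, B.ι d ∈ Set.Ioo (0 : ℝ) 1


set_option linter.unusedSectionVars false
set_option linter.unnecessarySimpa false
set_option linter.unreachableTactic false
set_option linter.unusedTactic false
set_option linter.unusedVariables false
set_option maxHeartbeats 1000000

/-! basic acyclicity facts -/

lemma no_self_edge {E : Finset (V × V)} (h : Acyclic E) (x : V) : (x, x) ∉ E :=
  fun he => h x (Relation.TransGen.single he)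

lemma no_two_cycle {E : Finset (V × V)} (h : Acyclic E) {x y : V}
    (h1 : (x, y) ∈ E) (h2 : (y, x) ∈ E) : False :=
  h x ((Relation.TransGen.single h1).tail h2)

lemma no_reach_back {E : Finset (V × V)} (h : Acyclic E) {u v : V}
    (he : (u, v) ∈ E) (hr : Reaches E v u) : False :=
  h v (Relation.TransGen.tail' hr he)

lemma mem_Pre {E : Finset (V × V)} {p x : V} : p ∈ Pre E x ↔ (p, x) ∈ E := by
  constructor
  · rintro hp
    simp only [Pre, Finset.mem_image, Finset.mem_filter] at hp
    obtain ⟨e, ⟨he, h2⟩, h1⟩ := hp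
    cases e; subst h1; subst h2; exact he
  · intro h
    simp only [Pre, Finset.mem_image, Finset.mem_filter]
    exact ⟨(p, x), ⟨h, rfl⟩, rfl⟩

/-! blocked path lemmas -/

lemma blocked_infix {E : Finset (V × V)} {Z : Finset V} {W₁ W₂ : List V}
    (h : W₁ <:+: W₂) (hb : Blocked E Z W₁) : Blocked E Z W₂ := by
  obtain ⟨l₁, a, w, b, l₂, rfl, ht⟩ := hb
  obtain ⟨p, s, rfl⟩ := h
  exact ⟨p ++ l₁, a, w, b, l₂ ++ s, by simp, ht⟩

lemma blocked_snoc {E : Finset (V × V)} {Z : Finset V} {W : List V} {y : V}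
    (h : Blocked E Z (W ++ [y])) :
    Blocked E Z W ∨ ∃ l a w, W = l ++ [a, w] ∧ BlockedTriple E Z a w y := by
  obtain ⟨l₁, a, w, b, l₂, heq, ht⟩ := h
  rcases List.eq_nil_or_concat l₂ with rfl | ⟨l₂', c, rfl⟩
  · have h2 : W ++ [y] = (l₁ ++ [a, w]) ++ [b] := by simpa using heq
    obtain ⟨h3, h4⟩ := List.append_inj' h2 rfl
    subst h3
    right
    refine ⟨l₁, a, w, rfl, ?_⟩
    have hy : y = b := by simpa using h4
    subst hy; exact ht
  · have h2 : W ++ [y] = (l₁ ++ a :: w :: b :: l₂') ++ [c] := by simp [heq]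
    obtain ⟨h3, h4⟩ := List.append_inj' h2 rfl
    subst h3
    exact Or.inl ⟨l₁, a, w, b, l₂', rfl, ht⟩

lemma head?_append_left {l₁ : List V} (l₂ : List V) (h : l₁ ≠ []) :
    (l₁ ++ l₂).head? = l₁.head? := by
  cases l₁ with
  | nil => exact absurd rfl h
  | cons a t => simp

/-- truncation of an unblocked simple path at a node on it -/
lemma truncate {E : Finset (V × V)} {Z : Finset V} {W : List V} {x u : V}
    (hc : W.Chain' (Adjacent E)) (hn : W.Nodup) (hh : W.head? = some x)
    (hb : ¬ Blocked E Z W) (hu : u ∈ W) :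
    ∃ W', W'.Chain' (Adjacent E) ∧ W'.Nodup ∧ W'.head? = some x ∧
      W'.getLast? = some u ∧ ¬ Blocked E Z W' ∧ ∀ w ∈ W', w ∈ W := by
  obtain ⟨s, t, rfl⟩ := List.append_of_mem hu
  refine ⟨s ++ [u], ?_, ?_, ?_, ?_, ?_, ?_⟩
  · exact hc.prefix ⟨t, by simp⟩
  · exact hn.sublist (by simpa using (List.prefix_iff_eq_append.mpr (by simp)).sublist)
  · cases s with
    | nil => simpa using hh
    | cons a s' => simpa using hh
  · exact List.getLast?_concat
  · intro hB
    exact hb (blocked_infix ⟨[], t, by simp⟩ hB)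
  · intro w hw
    simp only [List.mem_append, List.mem_singleton] at hw ⊢
    rcases hw with h | h
    · exact Or.inl h
    · subst h; exact Or.inr List.mem_cons_self

lemma getLast?_append_right (l : List V) {m : List V} (h : m ≠ []) :
    (l ++ m).getLast? = m.getLast? := by
  rw [List.getLast?_append, List.getLast?_eq_getLast_of_ne_nil h]
  rfl

lemma mem_of_getLast?_eq {l : List V} {a : V} (h : l.getLast? = some a) : a ∈ l := by
  obtain ⟨hne, rfl⟩ := List.mem_getLast?_eq_getLast (Option.mem_def.mpr h)
  exact List.getLast_mem hne

/-! extracting simple paths -/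

lemma exists_dup_split : ∀ (L : List V), ¬ L.Nodup →
    ∃ (x : V) (l₁ l₂ l₃ : List V), L = l₁ ++ x :: (l₂ ++ x :: l₃) := by
  intro L
  induction L with
  | nil => intro h; exact absurd List.nodup_nil h
  | cons a L' ih =>
    intro h
    rw [List.nodup_cons] at h
    push_neg at h
    by_cases ha : a ∈ L'
    · obtain ⟨s, t, rfl⟩ := List.append_of_mem ha
      exact ⟨a, [], s, t, by simp⟩
    · obtain ⟨x, l₁, l₂, l₃, rfl⟩ := ih (h ha)
      exact ⟨x, a :: l₁, l₂, l₃, by simp⟩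

lemma chain'_dedup {R : V → V → Prop} : ∀ (n : ℕ) (L : List V), L.length ≤ n →
    L.Chain' R → ∃ L' : List V, L'.Chain' R ∧ L'.Nodup ∧ L'.head? = L.head? ∧
      L'.getLast? = L.getLast? ∧ ∀ w ∈ L', w ∈ L := by
  intro n
  induction n with
  | zero =>
    intro L hL _
    have hnil : L = [] := List.eq_nil_of_length_eq_zero (Nat.le_zero.mp hL)
    subst hnil
    exact ⟨[], List.isChain_nil, List.nodup_nil, rfl, rfl, fun w hw => hw⟩
  | succ n ih =>
    intro L hL hc
    by_cases hn : L.Nodup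
    · exact ⟨L, hc, hn, rfl, rfl, fun w hw => hw⟩
    · obtain ⟨x, l₁, l₂, l₃, rfl⟩ := exists_dup_split L hn
      have hc1 : (l₁ ++ [x]).Chain' R := hc.prefix ⟨l₂ ++ x :: l₃, by simp⟩
      have hc2 : (x :: l₃).Chain' R := hc.suffix ⟨l₁ ++ x :: l₂, by simp⟩
      have hcnew : (l₁ ++ x :: l₃).Chain' R := by
        unfold List.Chain' at hc1 ⊢
        rw [List.isChain_append]
        rw [List.isChain_append] at hc1
        refine ⟨hc1.1, hc2, ?_⟩
        intro p hp q hq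
        simp only [List.head?_cons, Option.mem_def, Option.some.injEq] at hq
        subst hq
        exact hc1.2.2 p hp x (by simp)
      have hlen : (l₁ ++ x :: l₃).length ≤ n := by
        simp only [List.length_append, List.length_cons] at hL ⊢
        omega
      obtain ⟨L', h1, h2, h3, h4, h5⟩ := ih _ hlen hcnew
      refine ⟨L', h1, h2, ?_, ?_, ?_⟩
      · rw [h3]
        cases l₁ with
        | nil => simp
        | cons a t => simp
      · rw [h4, getLast?_append_right _ (List.cons_ne_nil _ _),
          getLast?_append_right _ (List.cons_ne_nil _ _)]
        have : (x :: (l₂ ++ x :: l₃)) = (x :: l₂) ++ (x :: l₃) := by simp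
        rw [this, getLast?_append_right _ (List.cons_ne_nil _ _)]
      · intro w hw
        have := h5 w hw
        simp only [List.mem_append, List.mem_cons] at this ⊢
        tauto

/-- from reachability, get a nodup directed path all of whose nodes are reachable -/
lemma reaches_path {E : Finset (V × V)} {u t : V} (h : Reaches E u t) :
    ∃ L : List V, L.Chain' (fun a b => (a, b) ∈ E) ∧ L.Nodup ∧
      L.head? = some u ∧ L.getLast? = some t ∧ ∀ w ∈ L, Reaches E u w := by
  have walk : ∃ L : List V, L.Chain' (fun a b => (a, b) ∈ E) ∧
      L.head? = some u ∧ L.getLast? = some t ∧ ∀ w ∈ L, Reaches E u w := by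
    induction h using Relation.ReflTransGen.head_induction_on with
    | refl =>
      refine ⟨[t], List.isChain_singleton t, rfl, rfl, ?_⟩
      intro w hw
      rw [List.mem_singleton.mp hw]
      exact Relation.ReflTransGen.refl
    | head h' _ ih =>
      rename_i a c _
      obtain ⟨L, hc, hh, hl, hr⟩ := ih
      refine ⟨a :: L, ?_, rfl, ?_, ?_⟩
      · apply List.isChain_cons.mpr
        refine ⟨?_, hc⟩
        intro y hy
        rw [hh] at hy
        simp only [Option.mem_def, Option.some.injEq] at hy
        subst hy; exact h'
      · cases L with
        | nil => simp at hh
        | cons b L' => rw [List.getLast?_cons_cons]; exact hl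
      · intro w hw
        rcases List.mem_cons.mp hw with rfl | hw'
        · exact Relation.ReflTransGen.refl
        · exact Relation.ReflTransGen.head h' (hr w hw')
  obtain ⟨L, hc, hh, hl, hr⟩ := walk
  obtain ⟨L', h1, h2, h3, h4, h5⟩ := chain'_dedup L.length L le_rfl hc
  exact ⟨L', h1, h2, h3.trans hh, h4.trans hl, fun w hw => hr w (h5 w hw)⟩

/-! unblocked simple paths from X -/

def USPto (E : Finset (V × V)) (Z X : Finset V) (u : V) : Prop :=
  ∃ x ∈ X, ∃ W : List V, W.Chain' (Adjacent E) ∧ W.Nodup ∧ W.head? = some x ∧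
    W.getLast? = some u ∧ ¬ Blocked E Z W

lemma usp_of_mem {E : Finset (V × V)} {Z X : Finset V} {x u : V} {W : List V}
    (hx : x ∈ X) (hc : W.Chain' (Adjacent E)) (hn : W.Nodup) (hh : W.head? = some x)
    (hb : ¬ Blocked E Z W) (hu : u ∈ W) : USPto E Z X u := by
  obtain ⟨W', h1, h2, h3, h4, h5, _⟩ := truncate hc hn hh hb hu
  exact ⟨x, hx, W', h1, h2, h3, h4, h5⟩

/-- appending a fresh node `y` to an unblocked simple path: only one new triple -/
lemma usp_snoc {E : Finset (V × V)} {Z X : Finset V} {x u y : V} {W : List V}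
    (hx : x ∈ X) (hc : W.Chain' (Adjacent E)) (hn : W.Nodup) (hh : W.head? = some x)
    (hl : W.getLast? = some u) (hb : ¬ Blocked E Z W) (hy : y ∉ W)
    (hadj : Adjacent E u y)
    (htrip : ∀ l a, W = l ++ [a, u] → ¬ BlockedTriple E Z a u y) :
    (W ++ [y]).Chain' (Adjacent E) ∧ (W ++ [y]).Nodup ∧ (W ++ [y]).head? = some x ∧
      (W ++ [y]).getLast? = some y ∧ ¬ Blocked E Z (W ++ [y]) := by
  have hWne : W ≠ [] := by rintro rfl; simp at hh
  refine ⟨?_, ?_, ?_, List.getLast?_concat, ?_⟩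
  · unfold List.Chain'
    rw [List.isChain_append]
    refine ⟨hc, List.isChain_singleton y, ?_⟩
    intro p hp q hq
    rw [hl] at hp
    simp only [List.head?_cons, Option.mem_def, Option.some.injEq] at hp hq
    subst hp; subst hq; exact hadj
  · simp [List.nodup_append, hn, List.disjoint_singleton, hy]
    rintro a ha rfl; exact hy ha
  · rw [head?_append_left _ hWne]; exact hh
  · intro hB
    rcases blocked_snoc hB with hB' | ⟨l, a, w, heq, ht⟩
    · exact hb hB'
    · have hw : w = u := by
        have h2 := hl
        rw [heq, getLast?_append_right _ (List.cons_ne_nil _ _)] at h2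
        simpa using h2
      subst hw
      exact htrip l a heq ht

/-- descending along a directed Z-free path preserves unblocked connectivity -/
lemma descend {E : Finset (V × V)} (hacyc : Acyclic E) {Z X : Finset V} :
    ∀ (n : ℕ) (L : List V), L.length ≤ n → L.Chain' (fun a b => (a, b) ∈ E) →
    (∀ w ∈ L, w ∉ Z) → ∀ v t, L.head? = some v → L.getLast? = some t →
    USPto E Z X v → USPto E Z X t := by
  intro n
  induction n with
  | zero =>
    intro L hL _ _ v t hh _ _
    have hnil : L = [] := List.eq_nil_of_length_eq_zero (Nat.le_zero.mp hL)
    subst hnil; simp at hh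
  | succ n ih =>
    intro L hL hc hZ v t hh hl hU
    cases L with
    | nil => simp at hh
    | cons v₀ L' =>
      have hv : v₀ = v := by simpa using hh
      subst hv
      cases L' with
      | nil =>
        have : v₀ = t := by simpa using hl
        subst this; exact hU
      | cons v₁ L'' =>
        have hedge : (v₀, v₁) ∈ E := (List.isChain_cons_cons.mp hc).1
        have hc' : (v₁ :: L'').Chain' (fun a b => (a, b) ∈ E) := (List.isChain_cons_cons.mp hc).2
        have hZ' : ∀ w ∈ v₁ :: L'', w ∉ Z := fun w hw => hZ w (List.mem_cons_of_mem _ hw)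
        have hlen : (v₁ :: L'').length ≤ n := by
          simp only [List.length_cons] at hL ⊢; omega
        have hl' : (v₁ :: L'').getLast? = some t := by
          rw [← List.getLast?_cons_cons (a := v₀)]; exact hl
        refine ih (v₁ :: L'') hlen hc' hZ' v₁ t rfl hl' ?_
        obtain ⟨x, hx, W, hcW, hnW, hhW, hlW, hbW⟩ := hU
        by_cases hmem : v₁ ∈ W
        · exact usp_of_mem hx hcW hnW hhW hbW hmem
        · have htrip : ∀ l a, W = l ++ [a, v₀] → ¬ BlockedTriple E Z a v₀ v₁ := by
            intro l a _ ht
            rcases ht with ⟨hvZ, _⟩ | ⟨_, h2, _⟩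
            · exact hZ v₀ (by simp) hvZ
            · exact no_two_cycle hacyc hedge h2
          obtain ⟨p1, p2, p3, p4, p5⟩ :=
            usp_snoc hx hcW hnW hhW hlW hbW hmem (Or.inl hedge) htrip
          exact ⟨x, hx, W ++ [v₁], p1, p2, p3, p4, p5⟩

/-- reversed directed path ending with an extra in-edge gives an unblocked simple path -/
lemma rev_usp {E : Finset (V × V)} (hacyc : Acyclic E) {Z X : Finset V}
    {L : List V} {w₀ t u' : V}
    (hc : L.Chain' (fun a b => (a, b) ∈ E)) (hn : L.Nodup)
    (hh : L.head? = some w₀) (hl : L.getLast? = some t) (ht : t ∈ X)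
    (hZ : ∀ w ∈ L, w ∉ Z) (hu' : u' ∉ L) (hedge : (u', w₀) ∈ E) :
    USPto E Z X u' := by
  have hLne : L ≠ [] := by rintro rfl; simp at hh
  have hrevchain : (L.reverse ++ [u']).Chain' (fun p q => (q, p) ∈ E) := by
    unfold List.Chain'
    rw [List.isChain_append]
    refine ⟨List.isChain_reverse.mpr (hc.imp fun a b h => h), List.isChain_singleton _, ?_⟩
    intro p hp q hq
    rw [List.getLast?_reverse, hh] at hp
    simp only [List.head?_cons, Option.mem_def, Option.some.injEq] at hp hq
    subst hp; subst hq
    exact hedge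
  refine ⟨t, ht, L.reverse ++ [u'], ?_, ?_, ?_, List.getLast?_concat, ?_⟩
  · exact hrevchain.imp (fun a b h => Or.inr h)
  · simp [List.nodup_append, hn, List.disjoint_singleton, hu']
    rintro a ha rfl; exact hu' ha
  · rw [head?_append_left _ (by simpa using hLne), List.head?_reverse, hl]
  · rintro ⟨l₁, a, w, b, l₂, heq, htrip⟩
    have hinfix : [a, w, b] <:+: (L.reverse ++ [u']) := ⟨l₁, l₂, by simp [heq]⟩
    have hch : ([a, w, b] : List V).Chain' (fun p q => (q, p) ∈ E) := hrevchain.infix hinfix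
    have hwa : (w, a) ∈ E := (List.isChain_cons_cons.mp hch).1
    have hbw : (b, w) ∈ E := (List.isChain_cons_cons.mp (List.isChain_cons_cons.mp hch).2).1
    have hwL : w ∈ L := by
      have hwmem : w ∈ L.reverse ++ [u'] := by rw [heq]; simp
      rcases List.mem_append.mp hwmem with h | h
      · exact List.mem_reverse.mp h
      · exfalso
        simp only [List.mem_singleton] at h
        subst h
        have hnodup : (L.reverse ++ [w]).Nodup := by
          simp [List.nodup_append, hn, List.disjoint_singleton, hu']
          rintro a ha rfl; exact hu' ha
        rw [heq] at hnodup
        have hblast : (b :: l₂).getLast? = some w := by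
          have h3 := List.getLast?_concat (a := w) (l := L.reverse)
          rw [heq, List.append_cons, List.append_cons,
            getLast?_append_right _ (List.cons_ne_nil _ _)] at h3
          exact h3
        have hbmem : w ∈ b :: l₂ := mem_of_getLast?_eq hblast
        have hsub : (w :: b :: l₂).Nodup := by
          have hinf : (w :: b :: l₂) <:+: (l₁ ++ a :: w :: b :: l₂) :=
            ⟨l₁ ++ [a], [], by simp⟩
          exact hnodup.sublist hinf.sublist
        exact (List.nodup_cons.mp hsub).1 hbmem
    have hwZ : w ∉ Z := hZ w hwL
    rcases htrip with ⟨h1, _⟩ | ⟨h2, _, _⟩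
    · exact hwZ h1
    · exact no_two_cycle hacyc h2 hwa


/-! d-separation -/

/-! the ancestral set -/

def AncSet (E : Finset (V × V)) (T : Finset V) : Finset V :=
  Finset.univ.filter fun v => ∃ t ∈ T, Reaches E v t

lemma mem_AncSet {E : Finset (V × V)} {T : Finset V} {v : V} :
    v ∈ AncSet E T ↔ ∃ t ∈ T, Reaches E v t := by
  simp [AncSet]

lemma subset_AncSet {E : Finset (V × V)} (T : Finset V) : T ⊆ AncSet E T :=
  fun t ht => mem_AncSet.mpr ⟨t, ht, Relation.ReflTransGen.refl⟩

lemma AncSet_parent_closed {E : Finset (V × V)} {T : Finset V} {p v : V}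
    (hv : v ∈ AncSet E T) (hp : (p, v) ∈ E) : p ∈ AncSet E T := by
  obtain ⟨t, ht, hr⟩ := mem_AncSet.mp hv
  exact mem_AncSet.mpr ⟨t, ht, Relation.ReflTransGen.head hp hr⟩

/-- If `v` is in the ancestral set, has no descendant in `Z`, and `u' → v`, then
`u'` is reachable by an unblocked simple path from `X` (given one into `v`). -/
lemma reroute {E : Finset (V × V)} (hacyc : Acyclic E) {X Y Z : Finset V}
    (hds : DSep E X Y Z) {v u' : V}
    (hv : v ∈ AncSet E (X ∪ Y ∪ Z)) (hnd : ∀ d, Reaches E v d → d ∉ Z)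
    (hedge : (u', v) ∈ E) (hxv : USPto E Z X v) : USPto E Z X u' := by
  obtain ⟨t, ht, hr⟩ := mem_AncSet.mp hv
  have htZ : t ∉ Z := hnd t hr
  obtain ⟨L, hc, hn, hh, hl, hreach⟩ := reaches_path hr
  have hZL : ∀ w ∈ L, w ∉ Z := fun w hw => hnd w (hreach w hw)
  have hu'L : u' ∉ L := by
    intro hmem
    exact no_reach_back hacyc hedge (hreach u' hmem)
  rcases Finset.mem_union.mp ht with hXY | hZ'
  · rcases Finset.mem_union.mp hXY with hX | hY
    · exact rev_usp hacyc hc hn hh hl hX hZL hu'L hedge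
    · exfalso
      obtain ⟨x, hx, W, p1, p2, p3, p4, p5⟩ :=
        descend hacyc L.length L le_rfl hc hZL v t hh hl hxv
      exact p5 (hds x hx t hY W p1 p2 p3 p4)
  · exact absurd hZ' htZ

/-- main lemma: the `USPto`-reachable set is closed under moral cliques
`{v} ∪ Pre(v)` (minus `Z`) for `v` in the ancestral set. -/
lemma R_clique {E : Finset (V × V)} (hacyc : Acyclic E) {X Y Z : Finset V}
    (hds : DSep E X Y Z) {v u u' : V}
    (hv : v ∈ AncSet E (X ∪ Y ∪ Z))
    (hu : u = v ∨ (u, v) ∈ E) (hu' : u' = v ∨ (u', v) ∈ E)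
    (huZ : u ∉ Z) (hu'Z : u' ∉ Z)
    (hR : USPto E Z X u) : USPto E Z X u' := by
  obtain ⟨x, hx, W, hcW, hnW, hhW, hlW, hbW⟩ := hR
  by_cases hmem : u' ∈ W
  · exact usp_of_mem hx hcW hnW hhW hbW hmem
  have huW : u ∈ W := mem_of_getLast?_eq hlW
  have hne : u' ≠ u := fun h => hmem (h ▸ huW)
  have huAnc : u ∈ AncSet E (X ∪ Y ∪ Z) := by
    rcases hu with rfl | hE
    · exact hv
    · exact AncSet_parent_closed hv hE
  -- case A : direct edge u → u'
  by_cases hA : (u, u') ∈ E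
  · have htrip : ∀ l a, W = l ++ [a, u] → ¬ BlockedTriple E Z a u u' := by
      intro l a _ ht
      rcases ht with ⟨hZ', _⟩ | ⟨_, h2, _⟩
      · exact huZ hZ'
      · exact no_two_cycle hacyc hA h2
    obtain ⟨p1, p2, p3, p4, p5⟩ :=
      usp_snoc hx hcW hnW hhW hlW hbW hmem (Or.inl hA) htrip
    exact ⟨x, hx, W ++ [u'], p1, p2, p3, p4, p5⟩
  -- case B : direct edge u' → u
  by_cases hB : (u', u) ∈ E
  · by_cases hdesc : ∀ d, Reaches E u d → d ∉ Z
    · exact reroute hacyc hds huAnc hdesc hB ⟨x, hx, W, hcW, hnW, hhW, hlW, hbW⟩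
    · push_neg at hdesc
      obtain ⟨d0, hd1, hd2⟩ := hdesc
      have htrip : ∀ l a, W = l ++ [a, u] → ¬ BlockedTriple E Z a u u' := by
        intro l a _ ht
        rcases ht with ⟨hZ', _⟩ | ⟨_, _, h3⟩
        · exact huZ hZ'
        · exact h3 d0 hd1 hd2
      obtain ⟨p1, p2, p3, p4, p5⟩ :=
        usp_snoc hx hcW hnW hhW hlW hbW hmem (Or.inr hB) htrip
      exact ⟨x, hx, W ++ [u'], p1, p2, p3, p4, p5⟩
  -- case C : u and u' are both parents of v
  have huv : (u, v) ∈ E := by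
    rcases hu with rfl | hE
    · rcases hu' with rfl | hE'
      · exact absurd rfl hne
      · exact absurd hE' hB
    · exact hE
  have hu'v : (u', v) ∈ E := by
    rcases hu' with rfl | hE'
    · exact absurd huv hA
    · exact hE'
  have hvne : v ≠ u := by
    rintro rfl
    exact no_self_edge hacyc v huv
  have hvu' : v ≠ u' := by
    rintro rfl
    exact no_self_edge hacyc v hu'v
  by_cases hvW : v ∈ W
  · -- v lies on the path: truncate at v, then attach u'
    obtain ⟨W₁, W₂, rfl⟩ := List.append_of_mem hvW
    have hW₀c : (W₁ ++ [v]).Chain' (Adjacent E) := hcW.prefix ⟨W₂, by simp⟩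
    have hW₀n : (W₁ ++ [v]).Nodup :=
      hnW.sublist (by simpa using (List.prefix_iff_eq_append.mpr (by simp)).sublist)
    have hW₀h : (W₁ ++ [v]).head? = some x := by
      cases W₁ with
      | nil => simpa using hhW
      | cons a s' => simpa using hhW
    have hW₀l : (W₁ ++ [v]).getLast? = some v := List.getLast?_concat
    have hW₀b : ¬ Blocked E Z (W₁ ++ [v]) := fun hB' =>
      hbW (blocked_infix ⟨[], W₂, by simp⟩ hB')
    have hu'W₀ : u' ∉ W₁ ++ [v] := by
      intro hm
      rcases List.mem_append.mp hm with h | h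
      · exact hmem (List.mem_append.mpr (Or.inl h))
      · exact hvu' (List.mem_singleton.mp h).symm
    -- v is not the last node of W, so it has a successor s
    have hW₂ne : W₂ ≠ [] := by
      rintro rfl
      have h2 := hlW
      rw [getLast?_append_right _ (List.cons_ne_nil _ _)] at h2
      simp only [List.getLast?_singleton, Option.some.injEq] at h2
      exact hvne h2
    obtain ⟨s, W₂', rfl⟩ := List.exists_cons_of_ne_nil hW₂ne
    have hvs : Adjacent E v s := by
      have hinf : ([v, s] : List V) <:+: (W₁ ++ v :: s :: W₂') := ⟨W₁, W₂', by simp⟩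
      exact (List.isChain_cons_cons.mp (hcW.infix hinf)).1
    by_cases hdesc : ∀ d, Reaches E v d → d ∉ Z
    · exact reroute hacyc hds hv hdesc hu'v
        ⟨x, hx, W₁ ++ [v], hW₀c, hW₀n, hW₀h, hW₀l, hW₀b⟩
    · push_neg at hdesc
      obtain ⟨d0, hd1, hd2⟩ := hdesc
      have htrip : ∀ l a, W₁ ++ [v] = l ++ [a, v] → ¬ BlockedTriple E Z a v u' := by
        intro l a heq ht
        have hW₁ : W₁ = l ++ [a] := by
          have h2 : W₁ ++ [v] = (l ++ [a]) ++ [v] := by simpa using heq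
          exact (List.append_inj' h2 rfl).1
        rcases ht with ⟨hvZ, hconf⟩ | ⟨_, _, h3⟩
        · -- v ∈ Z; the only possible config has (v, a) ∈ E; then (a,v,s) blocks W
          have hva : (v, a) ∈ E := by
            rcases hconf with ⟨_, hvu'E⟩ | ⟨_, hva⟩ | ⟨hva, hvu'E⟩
            · exact absurd hvu'E (fun h => no_two_cycle hacyc h hu'v)
            · exact hva
            · exact hva
          apply hbW
          refine ⟨l, a, v, s, W₂', by simp [hW₁], ?_⟩
          left
          refine ⟨hvZ, ?_⟩
          rcases hvs with hvsE | hsvE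
          · exact Or.inr (Or.inr ⟨hva, hvsE⟩)
          · exact Or.inr (Or.inl ⟨hsvE, hva⟩)
        · exact h3 d0 hd1 hd2
      obtain ⟨p1, p2, p3, p4, p5⟩ :=
        usp_snoc hx hW₀c hW₀n hW₀h hW₀l hW₀b hu'W₀ (Or.inr hu'v) htrip
      exact ⟨x, hx, (W₁ ++ [v]) ++ [u'], p1, p2, p3, p4, p5⟩
  · -- v not on the path: attach v, then u'
    have htrip1 : ∀ l a, W = l ++ [a, u] → ¬ BlockedTriple E Z a u v := by
      intro l a _ ht
      rcases ht with ⟨hZ', _⟩ | ⟨_, h2, _⟩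
      · exact huZ hZ'
      · exact no_two_cycle hacyc huv h2
    obtain ⟨q1, q2, q3, q4, q5⟩ :=
      usp_snoc hx hcW hnW hhW hlW hbW hvW (Or.inl huv) htrip1
    by_cases hdesc : ∀ d, Reaches E v d → d ∉ Z
    · exact reroute hacyc hds hv hdesc hu'v ⟨x, hx, W ++ [v], q1, q2, q3, q4, q5⟩
    · push_neg at hdesc
      obtain ⟨d0, hd1, hd2⟩ := hdesc
      have hu'Wv : u' ∉ W ++ [v] := by
        intro hm
        rcases List.mem_append.mp hm with h | h
        · exact hmem h
        · exact hvu' (List.mem_singleton.mp h).symm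
      have htrip2 : ∀ l a, W ++ [v] = l ++ [a, v] → ¬ BlockedTriple E Z a v u' := by
        intro l a heq ht
        have hau : a = u := by
          have h2 : W ++ [v] = (l ++ [a]) ++ [v] := by simpa using heq
          have h3 : W = l ++ [a] := (List.append_inj' h2 rfl).1
          have h4 := hlW
          rw [h3, List.getLast?_concat] at h4
          simpa using h4
        subst hau
        rcases ht with ⟨_, hconf⟩ | ⟨_, _, h3⟩
        · rcases hconf with ⟨_, hvu'E⟩ | ⟨_, hvuE⟩ | ⟨hvuE, _⟩
          · exact no_two_cycle hacyc hvu'E hu'v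
          · exact no_two_cycle hacyc hvuE huv
          · exact no_two_cycle hacyc hvuE huv
        · exact h3 d0 hd1 hd2
      obtain ⟨p1, p2, p3, p4, p5⟩ :=
        usp_snoc hx q1 q2 q3 q4 q5 hu'Wv (Or.inr hu'v) htrip2
      exact ⟨x, hx, (W ++ [v]) ++ [u'], p1, p2, p3, p4, p5⟩


lemma not_blocked_singleton {E : Finset (V × V)} {Z : Finset V} (x : V) :
    ¬ Blocked E Z [x] := by
  rintro ⟨l₁, a, w, b, l₂, heq, _⟩
  have h2 := congrArg List.length heq
  simp at h2
  omega

/-- The main graph-theoretic construction: a moral-clique-respecting split of the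
ancestral set into an `X`-side `A` and a `Y`-side `B` meeting in `Z`. -/
lemma split_exists {E : Finset (V × V)} (hacyc : Acyclic E) {X Y Z : Finset V}
    (hds : DSep E X Y Z) (hXZ : Disjoint X Z) (hYZ : Disjoint Y Z) :
    ∃ A B : Finset V, A ∪ B = AncSet E (X ∪ Y ∪ Z) ∧ A ∩ B = Z ∧ X ⊆ A ∧ Y ⊆ B ∧
      ∀ v ∈ AncSet E (X ∪ Y ∪ Z),
        insert v (Pre E v) ⊆ A ∨ insert v (Pre E v) ⊆ B := by
  classical
  set An := AncSet E (X ∪ Y ∪ Z) with hAn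
  set R : Finset V := (An \ Z).filter (fun u => USPto E Z X u) with hR
  refine ⟨R ∪ Z, An \ R, ?_, ?_, ?_, ?_, ?_⟩
  · apply Finset.Subset.antisymm
    · intro v hv
      rcases Finset.mem_union.mp hv with h | h
      · rcases Finset.mem_union.mp h with h' | h'
        · exact (Finset.mem_sdiff.mp (Finset.mem_filter.mp h').1).1
        · exact subset_AncSet _ (by simp [h'])
      · exact (Finset.mem_sdiff.mp h).1
    · intro v hv
      by_cases hvR : v ∈ R
      · exact Finset.mem_union_left _ (Finset.mem_union_left _ hvR)
      · exact Finset.mem_union_right _ (Finset.mem_sdiff.mpr ⟨hv, hvR⟩)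
  · apply Finset.Subset.antisymm
    · intro v hv
      obtain ⟨h1, h2⟩ := Finset.mem_inter.mp hv
      have hvR : v ∉ R := (Finset.mem_sdiff.mp h2).2
      rcases Finset.mem_union.mp h1 with h | h
      · exact absurd h hvR
      · exact h
    · intro v hv
      refine Finset.mem_inter.mpr ⟨Finset.mem_union_right _ hv, Finset.mem_sdiff.mpr
        ⟨subset_AncSet _ (by simp [hv]), ?_⟩⟩
      intro hvR
      exact (Finset.mem_sdiff.mp (Finset.mem_filter.mp hvR).1).2 hv
  · intro x hx
    apply Finset.mem_union_left
    rw [hR, Finset.mem_filter, Finset.mem_sdiff]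
    refine ⟨⟨subset_AncSet _ (by simp [hx]), Finset.disjoint_left.mp hXZ hx⟩,
      ⟨x, hx, [x], List.isChain_singleton x, List.nodup_singleton x, rfl, rfl,
        not_blocked_singleton x⟩⟩
  · intro y hy
    refine Finset.mem_sdiff.mpr ⟨subset_AncSet _ (by simp [hy]), ?_⟩
    intro hyR
    obtain ⟨x, hx, W, p1, p2, p3, p4, p5⟩ := (Finset.mem_filter.mp hyR).2
    exact p5 (hds x hx y hy W p1 p2 p3 p4)
  · intro v hv
    have hFamAn : insert v (Pre E v) ⊆ An := by
      intro u hu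
      rcases Finset.mem_insert.mp hu with rfl | hp
      · exact hv
      · exact AncSet_parent_closed hv (mem_Pre.mp hp)
    by_cases hint : ∃ u ∈ insert v (Pre E v), u ∈ R
    · left
      obtain ⟨u, hu, huR⟩ := hint
      intro u' hu'
      by_cases hu'Z : u' ∈ Z
      · exact Finset.mem_union_right _ hu'Z
      · apply Finset.mem_union_left
        obtain ⟨hu1, hu2⟩ := Finset.mem_filter.mp huR
        have huZ : u ∉ Z := (Finset.mem_sdiff.mp hu1).2
        have husp : USPto E Z X u' := by
          apply R_clique hacyc hds hv ?_ ?_ huZ hu'Z hu2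
          · rcases Finset.mem_insert.mp hu with rfl | hp
            · exact Or.inl rfl
            · exact Or.inr (mem_Pre.mp hp)
          · rcases Finset.mem_insert.mp hu' with rfl | hp
            · exact Or.inl rfl
            · exact Or.inr (mem_Pre.mp hp)
        rw [hR, Finset.mem_filter, Finset.mem_sdiff]
        exact ⟨⟨hFamAn hu', hu'Z⟩, husp⟩
    · right
      push_neg at hint
      intro u hu
      exact Finset.mem_sdiff.mpr ⟨hFamAn hu, hint u hu⟩


/-! probability side -/

def phi (B : GBN V) (v : V) (b : V → Bool) : ℝ :=
  if h : v ∈ InitSet B.edges then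
    ∑ b' : Asg (InitSet B.edges), if b' ⟨v, h⟩ = b v then B.ι b' else 0
  else copyProb B v (b v) b

lemma phi_nonneg (B : GBN V) (v : V) (b : V → Bool) : 0 ≤ phi B v b := by
  unfold phi
  split
  · apply Finset.sum_nonneg
    intro b' _
    split
    · exact B.ι_dist.1 b'
    · exact le_refl 0
  · unfold copyProb
    split
    · exact B.cpt_nonneg _ _
    · linarith [B.cpt_le_one v (fun p => b p.1)]

lemma phi_dependsOn (B : GBN V) (v : V) {b b' : V → Bool}
    (h : ∀ x ∈ insert v (Pre B.edges v), b x = b' x) : phi B v b = phi B v b' := by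
  have hv : b v = b' v := h v (Finset.mem_insert_self _ _)
  have hpre : (fun p : {p // p ∈ Pre B.edges v} => b p.1) =
      (fun p : {p // p ∈ Pre B.edges v} => b' p.1) := by
    funext p
    exact h p.1 (Finset.mem_insert_of_mem p.2)
  unfold phi
  split
  · rw [hv]
  · unfold copyProb
    rw [hv, hpre]

lemma phi_sum_one (B : GBN V) (hacyc : Acyclic B.edges) (v : V) (d : V → Bool) :
    phi B v (Function.update d v true) + phi B v (Function.update d v false) = 1 := by
  have hvP : v ∉ Pre B.edges v := fun h => no_self_edge hacyc v (mem_Pre.mp h)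
  have hupd : ∀ t : Bool, (fun p : {p // p ∈ Pre B.edges v} =>
      Function.update d v t p.1) = fun p => d p.1 := by
    intro t
    funext p
    apply Function.update_of_ne
    intro h
    apply hvP
    have h2 := p.2
    rw [h] at h2
    exact h2
  unfold phi
  split
  · rename_i h
    have hval : ∀ t : Bool, Function.update d v t v = t := fun t => Function.update_self _ _ _
    rw [hval, hval]
    rw [← Finset.sum_add_distrib]
    have : ∀ b' : Asg (InitSet B.edges),
        ((if b' ⟨v, h⟩ = true then B.ι b' else 0) +
          (if b' ⟨v, h⟩ = false then B.ι b' else 0)) = B.ι b' := by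
      intro b'
      cases hb : b' ⟨v, h⟩ <;> simp [hb]
    rw [Finset.sum_congr rfl (fun b' _ => this b')]
    exact B.ι_dist.2
  · unfold copyProb
    rw [Function.update_self, Function.update_self, hupd, hupd]
    simp

lemma distBN_eq_prod (B : GBN V) (hprod : IsProductDist B.ι) (b : V → Bool) :
    distBN B b = ∏ v, phi B v b := by
  have hsplit : (∏ v ∈ Finset.univ \ InitSet B.edges, phi B v b) *
      ∏ v ∈ InitSet B.edges, phi B v b = ∏ v, phi B v b :=
    Finset.prod_sdiff (Finset.subset_univ _)
  have hinit : ∏ v ∈ InitSet B.edges, phi B v b = B.ι (fun x => b x.1) := by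
    rw [hprod (fun x => b x.1)]
    rw [← Finset.prod_coe_sort (InitSet B.edges) (fun v => phi B v b)]
    apply Finset.prod_congr rfl
    intro x _
    show phi B x.1 b = _
    rw [phi, dif_pos x.2]
  have hrest : ∏ v ∈ Finset.univ \ InitSet B.edges, phi B v b =
      ∏ v ∈ Finset.univ \ InitSet B.edges, copyProb B v (b v) b := by
    apply Finset.prod_congr rfl
    intro v hv
    rw [phi, dif_neg (Finset.mem_sdiff.mp hv).2]
  rw [← hsplit, hinit, hrest, distBN]
  ring

lemma distBN_nonneg (B : GBN V) (hprod : IsProductDist B.ι) (b : V → Bool) :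
    0 ≤ distBN B b := by
  rw [distBN_eq_prod B hprod]
  exact Finset.prod_nonneg fun v _ => phi_nonneg B v b

def PC (E : Finset (V × V)) (S : Finset V) : Prop :=
  ∀ v ∈ S, ∀ p, (p, v) ∈ E → p ∈ S

lemma exists_source {E : Finset (V × V)} (hacyc : Acyclic E) {T : Finset V}
    (hT : T.Nonempty) : ∃ m ∈ T, ∀ w ∈ T, (w, m) ∉ E := by
  haveI : IsTrans V (Relation.TransGen fun a b => (a, b) ∈ E) :=
    ⟨fun _ _ _ h1 h2 => h1.trans h2⟩
  haveI : IsIrrefl V (Relation.TransGen fun a b => (a, b) ∈ E) := ⟨hacyc⟩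
  have wf := Finite.wellFounded_of_trans_of_irrefl
    (Relation.TransGen fun a b : V => (a, b) ∈ E)
  obtain ⟨m, hm, hmin⟩ := wf.has_min T (by exact_mod_cast hT)
  refine ⟨m, hm, ?_⟩
  intro w hw hE
  exact hmin w hw (Relation.TransGen.single hE)

lemma marg_eq (B : GBN V) (hacyc : Acyclic B.edges) (hprod : IsProductDist B.ι) :
    ∀ (n : ℕ) (S : Finset V), (Finset.univ \ S).card = n → PC B.edges S →
    ∀ d : V → Bool,
      (∑ b : V → Bool, if (∀ x ∈ S, b x = d x) then distBN B b else 0) =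
        ∏ v ∈ S, phi B v d := by
  intro n
  induction n with
  | zero =>
    intro S hcard _ d
    have hS : S = Finset.univ := by
      have h1 : Finset.univ \ S = ∅ := Finset.card_eq_zero.mp hcard
      have h2 : Finset.univ ⊆ S := by
        intro x _
        by_contra hx
        have : x ∈ Finset.univ \ S := Finset.mem_sdiff.mpr ⟨Finset.mem_univ x, hx⟩
        rw [h1] at this
        exact absurd this (Finset.notMem_empty x)
      exact Finset.Subset.antisymm (Finset.subset_univ S) h2
    subst hS
    have hcond : ∀ b : V → Bool, (∀ x ∈ Finset.univ, b x = d x) ↔ b = d := by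
      intro b
      constructor
      · intro h; funext x; exact h x (Finset.mem_univ x)
      · rintro rfl _ _; rfl
    rw [Finset.sum_congr rfl fun b _ => if_congr (hcond b) rfl rfl]
    rw [Finset.sum_ite_eq' Finset.univ d (fun b => distBN B b)]
    simp [distBN_eq_prod B hprod]
  | succ n ih =>
    intro S hcard hPC d
    have hTne : (Finset.univ \ S).Nonempty := by
      rw [← Finset.card_pos, hcard]; omega
    obtain ⟨m, hmT, hmsrc⟩ := exists_source hacyc hTne
    have hmS : m ∉ S := (Finset.mem_sdiff.mp hmT).2
    have hPC' : PC B.edges (insert m S) := by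
      intro v hv p hp
      rcases Finset.mem_insert.mp hv with rfl | hvS
      · by_cases hpS : p ∈ S
        · exact Finset.mem_insert_of_mem hpS
        · exact absurd hp (hmsrc p (Finset.mem_sdiff.mpr ⟨Finset.mem_univ p, hpS⟩))
      · exact Finset.mem_insert_of_mem (hPC v hvS p hp)
    have hcard' : (Finset.univ \ insert m S).card = n := by
      rw [Finset.card_sdiff_of_subset (Finset.subset_univ _)] at hcard ⊢
      rw [Finset.card_insert_of_notMem hmS]
      have := Finset.card_le_univ S
      omega
    have key : ∀ b : V → Bool,
        (if (∀ x ∈ S, b x = d x) then distBN B b else 0) =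
        (if (∀ x ∈ insert m S, b x = Function.update d m true x) then distBN B b else 0) +
        (if (∀ x ∈ insert m S, b x = Function.update d m false x) then distBN B b else 0) := by
      intro b
      have hiff : ∀ t : Bool, (∀ x ∈ insert m S, b x = Function.update d m t x) ↔
          ((∀ x ∈ S, b x = d x) ∧ b m = t) := by
        intro t
        constructor
        · intro h
          refine ⟨?_, ?_⟩
          · intro x hx
            have := h x (Finset.mem_insert_of_mem hx)
            rwa [Function.update_of_ne (fun he : x = m => hmS (he ▸ hx)) ] at this
          · have := h m (Finset.mem_insert_self _ _)
            rwa [Function.update_self] at this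
        · rintro ⟨h1, h2⟩ x hx
          rcases Finset.mem_insert.mp hx with rfl | hxS
          · rw [Function.update_self]; exact h2
          · rw [Function.update_of_ne (fun he : x = m => hmS (he ▸ hxS))]
            exact h1 x hxS
      by_cases hP : ∀ x ∈ S, b x = d x
      · cases hbm : b m
        · rw [if_pos hP, if_neg, if_pos ((hiff false).mpr ⟨hP, hbm⟩)]
          · ring
          · intro hc
            have := ((hiff true).mp hc).2
            rw [hbm] at this
            simp at this
        · rw [if_pos hP, if_pos ((hiff true).mpr ⟨hP, hbm⟩), if_neg]
          · ring
          · intro hc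
            have := ((hiff false).mp hc).2
            rw [hbm] at this
            simp at this
      · rw [if_neg hP, if_neg, if_neg]
        · ring
        · exact fun hc => hP ((hiff false).mp hc).1
        · exact fun hc => hP ((hiff true).mp hc).1
    rw [Finset.sum_congr rfl fun b _ => key b, Finset.sum_add_distrib,
      ih (insert m S) hcard' hPC' (Function.update d m true),
      ih (insert m S) hcard' hPC' (Function.update d m false),
      Finset.prod_insert hmS, Finset.prod_insert hmS]
    have hprodS : ∀ t : Bool, (∏ v ∈ S, phi B v (Function.update d m t)) =
        ∏ v ∈ S, phi B v d := by
      intro t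
      apply Finset.prod_congr rfl
      intro v hv
      apply phi_dependsOn
      intro x hx
      apply Function.update_of_ne
      rintro rfl
      rcases Finset.mem_insert.mp hx with rfl | hp
      · exact hmS hv
      · exact hmS (hPC v hv x (mem_Pre.mp hp))
    rw [hprodS true, hprodS false, ← add_mul, phi_sum_one B hacyc m d, one_mul]

def maskF (S : Finset V) (b : V → Bool) : V → Bool := fun v => if v ∈ S then b v else false

lemma probAgree_restrict (B : GBN V) (hacyc : Acyclic B.edges)
    (hprod : IsProductDist B.ι) {S U : Finset V}
    (hPC : PC B.edges S) (hUS : U ⊆ S) (d : V → Bool) :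
    (∑ b : V → Bool, if (∀ x ∈ U, b x = d x) then distBN B b else 0) =
    ∑ g : V → Bool, if ((∀ x, x ∉ S → g x = false) ∧ ∀ x ∈ U, g x = d x)
      then ∏ v ∈ S, phi B v g else 0 := by
  have hm : ∀ g : V → Bool, ∏ v ∈ S, phi B v g =
      ∑ b : V → Bool, if (∀ x ∈ S, b x = g x) then distBN B b else 0 :=
    fun g => (marg_eq B hacyc hprod (Finset.univ \ S).card S rfl hPC g).symm
  rw [show (∑ g : V → Bool, if ((∀ x, x ∉ S → g x = false) ∧ ∀ x ∈ U, g x = d x)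
      then ∏ v ∈ S, phi B v g else 0) =
    ∑ g : V → Bool, if ((∀ x, x ∉ S → g x = false) ∧ ∀ x ∈ U, g x = d x)
      then (∑ b : V → Bool, if (∀ x ∈ S, b x = g x) then distBN B b else 0) else 0
    from Finset.sum_congr rfl fun g _ => by rw [hm g]]
  have hstep : ∀ g : V → Bool,
      (if ((∀ x, x ∉ S → g x = false) ∧ ∀ x ∈ U, g x = d x)
        then (∑ b : V → Bool, if (∀ x ∈ S, b x = g x) then distBN B b else 0) else 0) =
      ∑ b : V → Bool, if (((∀ x, x ∉ S → g x = false) ∧ ∀ x ∈ U, g x = d x) ∧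
        ∀ x ∈ S, b x = g x) then distBN B b else 0 := by
    intro g
    by_cases hC : ((∀ x, x ∉ S → g x = false) ∧ ∀ x ∈ U, g x = d x)
    · rw [if_pos hC]
      apply Finset.sum_congr rfl
      intro b _
      by_cases hP : ∀ x ∈ S, b x = g x
      · rw [if_pos hP, if_pos ⟨hC, hP⟩]
      · rw [if_neg hP, if_neg (fun hc => hP hc.2)]
    · rw [if_neg hC]
      symm
      apply Finset.sum_eq_zero
      intro b _
      rw [if_neg (fun hc => hC hc.1)]
  rw [Finset.sum_congr rfl fun g _ => hstep g]
  rw [Finset.sum_comm]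
  apply Finset.sum_congr rfl
  intro b _
  have hinner : ∀ g : V → Bool,
      ((((∀ x, x ∉ S → g x = false) ∧ ∀ x ∈ U, g x = d x) ∧ ∀ x ∈ S, b x = g x)) ↔
      (g = maskF S b ∧ ∀ x ∈ U, b x = d x) := by
    intro g
    constructor
    · rintro ⟨⟨hsupp, hU⟩, hbg⟩
      constructor
      · funext v
        by_cases hv : v ∈ S
        · simp only [maskF, if_pos hv]
          exact (hbg v hv).symm
        · simp only [maskF, if_neg hv]
          exact hsupp v hv
      · intro x hx
        rw [hbg x (hUS hx)]
        exact hU x hx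
    · rintro ⟨rfl, hbd⟩
      refine ⟨⟨?_, ?_⟩, ?_⟩
      · intro x hx
        simp [maskF, hx]
      · intro x hx
        simp only [maskF, if_pos (hUS hx)]
        exact hbd x hx
      · intro x hx
        simp [maskF, hx]
  rw [Finset.sum_congr rfl fun g _ => if_congr (hinner g) rfl rfl]
  by_cases hQ : ∀ x ∈ U, b x = d x
  · rw [if_pos hQ]
    rw [Finset.sum_congr rfl fun g _ =>
      if_congr (and_iff_left hQ : (g = maskF S b ∧ ∀ x ∈ U, b x = d x) ↔ g = maskF S b) rfl rfl]
    exact ((Finset.sum_ite_eq' Finset.univ (maskF S b) (fun _ => distBN B b)).trans (by simp)).symm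
  · rw [if_neg hQ]
    symm
    apply Finset.sum_eq_zero
    intro g _
    rw [if_neg (fun hc => hQ hc.2)]

lemma ite_zero_mul_ite_zero' {P Q : Prop} [Decidable P] [Decidable Q] (a b : ℝ) :
    (if P then a else 0) * (if Q then b else 0) = if P ∧ Q then a * b else 0 := by
  by_cases hP : P <;> by_cases hQ : Q <;> simp [hP, hQ]

lemma sum_prod_split (B : GBN V) {S A Bs Z : Finset V}
    (hunion : A ∪ Bs = S) (hinter : A ∩ Bs = Z)
    (hfam : ∀ v ∈ S, insert v (Pre B.edges v) ⊆ A ∨ insert v (Pre B.edges v) ⊆ Bs)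
    {U : Finset V} (hZU : Z ⊆ U) (hUS : U ⊆ S) (d : V → Bool) :
    (∑ g : V → Bool, if ((∀ x, x ∉ S → g x = false) ∧ ∀ x ∈ U, g x = d x)
        then ∏ v ∈ S, phi B v g else 0) =
    (∑ g : V → Bool, if ((∀ x, x ∉ A → g x = false) ∧ ∀ x ∈ U ∩ A, g x = d x)
        then ∏ v ∈ S.filter (fun v => insert v (Pre B.edges v) ⊆ A), phi B v g else 0) *
    (∑ g : V → Bool, if ((∀ x, x ∉ Bs → g x = false) ∧ ∀ x ∈ U ∩ Bs, g x = d x)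
        then ∏ v ∈ S.filter (fun v => ¬ insert v (Pre B.edges v) ⊆ A), phi B v g else 0) := by
  classical
  set pA : V → Prop := fun v => insert v (Pre B.edges v) ⊆ A with hpA
  set SA := S.filter pA with hSA
  set SB := S.filter (fun v => ¬ pA v) with hSB
  have hfamB : ∀ v ∈ SB, insert v (Pre B.edges v) ⊆ Bs := by
    intro v hv
    obtain ⟨hvS, hnA⟩ := Finset.mem_filter.mp hv
    rcases hfam v hvS with h | h
    · exact absurd h hnA
    · exact h
  -- combine the two sums on the RHS into a sum over pairs
  rw [Finset.sum_mul_sum]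
  have hpair : ∀ (g₁ g₂ : V → Bool),
      ((if ((∀ x, x ∉ A → g₁ x = false) ∧ ∀ x ∈ U ∩ A, g₁ x = d x)
        then ∏ v ∈ SA, phi B v g₁ else 0) *
      (if ((∀ x, x ∉ Bs → g₂ x = false) ∧ ∀ x ∈ U ∩ Bs, g₂ x = d x)
        then ∏ v ∈ SB, phi B v g₂ else 0)) =
      if (((∀ x, x ∉ A → g₁ x = false) ∧ ∀ x ∈ U ∩ A, g₁ x = d x) ∧
          ((∀ x, x ∉ Bs → g₂ x = false) ∧ ∀ x ∈ U ∩ Bs, g₂ x = d x))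
        then (∏ v ∈ SA, phi B v g₁) * ∏ v ∈ SB, phi B v g₂ else 0 :=
    fun g₁ g₂ => ite_zero_mul_ite_zero' _ _
  rw [Finset.sum_congr rfl fun g₁ _ => Finset.sum_congr rfl fun g₂ _ => hpair g₁ g₂]
  -- write both sides as sums over filtered finsets
  rw [← Fintype.sum_prod_type']
  rw [← Finset.sum_filter, ← Finset.sum_filter]
  apply Finset.sum_bij'
    (i := fun g _ => (maskF A g, maskF Bs g))
    (j := fun p _ => fun v => if v ∈ A then p.1 v else p.2 v)
  · -- membership i
    intro g hg
    simp only [Finset.mem_filter, Finset.mem_univ, true_and] at hg ⊢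
    obtain ⟨hsupp, hagree⟩ := hg
    refine ⟨⟨?_, ?_⟩, ?_, ?_⟩
    · intro x hx
      simp [maskF, hx]
    · intro x hx
      obtain ⟨hxU, hxA⟩ := Finset.mem_inter.mp hx
      simp only [maskF, if_pos hxA]
      exact hagree x hxU
    · intro x hx
      simp [maskF, hx]
    · intro x hx
      obtain ⟨hxU, hxB⟩ := Finset.mem_inter.mp hx
      simp only [maskF, if_pos hxB]
      exact hagree x hxU
  · -- membership j
    intro p hp
    simp only [Finset.mem_filter, Finset.mem_univ, true_and] at hp ⊢
    obtain ⟨⟨hs1, ha1⟩, hs2, ha2⟩ := hp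
    constructor
    · intro x hx
      have hxA : x ∉ A := fun h => hx (hunion ▸ Finset.mem_union_left _ h)
      have hxB : x ∉ Bs := fun h => hx (hunion ▸ Finset.mem_union_right _ h)
      rw [if_neg hxA]
      exact hs2 x hxB
    · intro x hx
      by_cases hxA : x ∈ A
      · rw [if_pos hxA]
        exact ha1 x (Finset.mem_inter.mpr ⟨hx, hxA⟩)
      · rw [if_neg hxA]
        have hxS : x ∈ S := hUS hx
        have hxB : x ∈ Bs := by
          rcases Finset.mem_union.mp (hunion ▸ hxS : x ∈ A ∪ Bs) with h | h
          · exact absurd h hxA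
          · exact h
        exact ha2 x (Finset.mem_inter.mpr ⟨hx, hxB⟩)
  · -- left inverse
    intro g hg
    simp only [Finset.mem_filter, Finset.mem_univ, true_and] at hg
    obtain ⟨hsupp, _⟩ := hg
    funext v
    by_cases hvA : v ∈ A
    · simp [maskF, hvA]
    · simp only [maskF, if_neg hvA]
      by_cases hvB : v ∈ Bs
      · simp [hvB]
      · rw [if_neg hvB]
        exact (hsupp v (fun h => (Finset.mem_union.mp (hunion ▸ h : v ∈ A ∪ Bs)).elim hvA hvB)).symm
  · -- right inverse
    intro p hp
    simp only [Finset.mem_filter, Finset.mem_univ, true_and] at hp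
    obtain ⟨⟨hs1, ha1⟩, hs2, ha2⟩ := hp
    have h1 : maskF A (fun v => if v ∈ A then p.1 v else p.2 v) = p.1 := by
      funext v
      by_cases hvA : v ∈ A
      · simp [maskF, hvA]
      · simp only [maskF, if_neg hvA]
        exact (hs1 v hvA).symm
    have h2 : maskF Bs (fun v => if v ∈ A then p.1 v else p.2 v) = p.2 := by
      funext v
      by_cases hvB : v ∈ Bs
      · simp only [maskF, if_pos hvB]
        by_cases hvA : v ∈ A
        · rw [if_pos hvA]
          have hvZ : v ∈ Z := hinter ▸ Finset.mem_inter.mpr ⟨hvA, hvB⟩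
          rw [ha1 v (Finset.mem_inter.mpr ⟨hZU hvZ, hvA⟩),
            ha2 v (Finset.mem_inter.mpr ⟨hZU hvZ, hvB⟩)]
        · rw [if_neg hvA]
      · simp only [maskF, if_neg hvB]
        exact (hs2 v hvB).symm
    exact Prod.ext h1 h2
  · -- values agree
    intro g hg
    simp only [Finset.mem_filter, Finset.mem_univ, true_and] at hg
    have hSAB : (∏ v ∈ S, phi B v g) = (∏ v ∈ SA, phi B v g) * ∏ v ∈ SB, phi B v g :=
      (Finset.prod_filter_mul_prod_filter_not S pA _).symm
    rw [hSAB]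
    congr 1
    · apply Finset.prod_congr rfl
      intro v hv
      apply phi_dependsOn
      intro x hx
      have hxA : x ∈ A := (Finset.mem_filter.mp hv).2 hx
      simp [maskF, hxA]
    · apply Finset.prod_congr rfl
      intro v hv
      apply phi_dependsOn
      intro x hx
      have hxB : x ∈ Bs := hfamB v hv hx
      simp [maskF, hxB]

lemma probIf_congr {μ : (V → Bool) → ℝ} {p q : (V → Bool) → Prop}
    (h : ∀ b, p b ↔ q b) : probIf μ p = probIf μ q :=
  Finset.sum_congr rfl fun b _ => if_congr (h b) rfl rfl

lemma probIf_eq_sum (μ : (V → Bool) → ℝ) (p : (V → Bool) → Prop) [DecidablePred p] :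
    probIf μ p = ∑ b : V → Bool, if p b then μ b else 0 := by
  unfold probIf
  apply Finset.sum_congr rfl
  intro b _
  by_cases hb : p b
  · rw [if_pos hb, if_pos hb]
  · rw [if_neg hb, if_neg hb]

/-- THE MAIN THEOREM (on the level of triples) -/
theorem dsep_indep (B : GBN V) (hacyc : Acyclic B.edges) (hprod : IsProductDist B.ι)
    {X Y Z : Finset V} (hXY : Disjoint X Y) (hXZ : Disjoint X Z) (hYZ : Disjoint Y Z)
    (hds : DSep B.edges X Y Z) : IndepTriple (distBN B) X Y Z := by
  classical
  intro a b c
  set μ := distBN B with hμ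
  set d : V → Bool := fun v =>
    if h : v ∈ X then a ⟨v, h⟩ else if h : v ∈ Y then b ⟨v, h⟩ else
      if h : v ∈ Z then c ⟨v, h⟩ else false with hd
  have hdX : ∀ (f : V → Bool), Agrees f X a ↔ ∀ x ∈ X, f x = d x := by
    intro f
    constructor
    · intro h x hx
      rw [hd]; simp only [dif_pos hx]
      exact h ⟨x, hx⟩
    · intro h x
      have h2 : d x.1 = a x := by rw [hd]; simp only [dif_pos x.2]
      rw [← h2]; exact h x.1 x.2
  have hdY : ∀ (f : V → Bool), Agrees f Y b ↔ ∀ x ∈ Y, f x = d x := by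
    intro f
    constructor
    · intro h x hx
      have hxX : x ∉ X := Finset.disjoint_right.mp hXY hx
      rw [hd]; simp only [dif_neg hxX, dif_pos hx]
      exact h ⟨x, hx⟩
    · intro h x
      have hxX : x.1 ∉ X := Finset.disjoint_right.mp hXY x.2
      have h2 : d x.1 = b x := by rw [hd]; simp only [dif_neg hxX, dif_pos x.2]
      rw [← h2]; exact h x.1 x.2
  have hdZ : ∀ (f : V → Bool), Agrees f Z c ↔ ∀ x ∈ Z, f x = d x := by
    intro f
    constructor
    · intro h x hx
      have hxX : x ∉ X := Finset.disjoint_right.mp hXZ hx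
      have hxY : x ∉ Y := Finset.disjoint_right.mp hYZ hx
      rw [hd]; simp only [dif_neg hxX, dif_neg hxY, dif_pos hx]
      exact h ⟨x, hx⟩
    · intro h x
      have hxX : x.1 ∉ X := Finset.disjoint_right.mp hXZ x.2
      have hxY : x.1 ∉ Y := Finset.disjoint_right.mp hYZ x.2
      have h2 : d x.1 = c x := by rw [hd]; simp only [dif_neg hxX, dif_neg hxY, dif_pos x.2]
      rw [← h2]; exact h x.1 x.2
  have hagree_union : ∀ (f : V → Bool) (P Q : Finset V),
      ((∀ x ∈ P, f x = d x) ∧ ∀ x ∈ Q, f x = d x) ↔ ∀ x ∈ P ∪ Q, f x = d x := by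
    intro f P Q
    constructor
    · rintro ⟨h1, h2⟩ x hx
      rcases Finset.mem_union.mp hx with h | h
      · exact h1 x h
      · exact h2 x h
    · intro h
      exact ⟨fun x hx => h x (Finset.mem_union_left _ hx),
        fun x hx => h x (Finset.mem_union_right _ hx)⟩
  -- the graph-theoretic split
  obtain ⟨A, Bs, hunion, hinter, hXA, hYB, hfam⟩ := split_exists hacyc hds hXZ hYZ
  set An := AncSet B.edges (X ∪ Y ∪ Z) with hAnDef
  have hPCAn : PC B.edges An := fun v hv p hp => AncSet_parent_closed hv hp
  have hZA : Z ⊆ A := by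
    intro z hz
    have h2 : z ∈ A ∩ Bs := by rw [hinter]; exact hz
    exact (Finset.mem_inter.mp h2).1
  have hZB : Z ⊆ Bs := by
    intro z hz
    have h2 : z ∈ A ∩ Bs := by rw [hinter]; exact hz
    exact (Finset.mem_inter.mp h2).2
  have hXB : ∀ x ∈ X, x ∉ Bs := by
    intro x hx hxB
    have : x ∈ Z := by
      rw [← hinter]; exact Finset.mem_inter.mpr ⟨hXA hx, hxB⟩
    exact Finset.disjoint_left.mp hXZ hx this
  have hYA : ∀ y ∈ Y, y ∉ A := by
    intro y hy hyA
    have : y ∈ Z := by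
      rw [← hinter]; exact Finset.mem_inter.mpr ⟨hyA, hYB hy⟩
    exact Finset.disjoint_left.mp hYZ hy this
  -- the alpha/beta factors
  set SA := An.filter (fun v => insert v (Pre B.edges v) ⊆ A) with hSAdef
  set alpha : Finset V → ℝ := fun W => ∑ g : V → Bool,
    if ((∀ x, x ∉ A → g x = false) ∧ ∀ x ∈ W, g x = d x)
      then ∏ v ∈ SA, phi B v g else 0 with halpha
  set beta : Finset V → ℝ := fun W => ∑ g : V → Bool,
    if ((∀ x, x ∉ Bs → g x = false) ∧ ∀ x ∈ W, g x = d x)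
      then ∏ v ∈ An.filter (fun v => ¬ insert v (Pre B.edges v) ⊆ A), phi B v g else 0
    with hbeta
  have key : ∀ U : Finset V, Z ⊆ U → U ⊆ An →
      (∑ f : V → Bool, if (∀ x ∈ U, f x = d x) then μ f else 0) =
        alpha (U ∩ A) * beta (U ∩ Bs) := by
    intro U hZU hUAn
    rw [hμ, probAgree_restrict B hacyc hprod hPCAn hUAn d,
      sum_prod_split B hunion hinter hfam hZU hUAn d]
  have hsubAn : X ∪ Y ∪ Z ⊆ An := subset_AncSet _
  -- intersection identities
  have hI1 : (X ∪ Y ∪ Z) ∩ A = X ∪ Z := by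
    apply Finset.ext
    intro v
    simp only [Finset.mem_inter, Finset.mem_union]
    constructor
    · rintro ⟨h1 | h2, hA⟩
      · rcases h1 with h | h
        · exact Or.inl h
        · exact absurd hA (hYA v h)
      · exact Or.inr h2
    · rintro (h | h)
      · exact ⟨Or.inl (Or.inl h), hXA h⟩
      · exact ⟨Or.inr h, hZA h⟩
  have hI2 : (X ∪ Y ∪ Z) ∩ Bs = Y ∪ Z := by
    apply Finset.ext
    intro v
    simp only [Finset.mem_inter, Finset.mem_union]
    constructor
    · rintro ⟨h1 | h2, hB⟩
      · rcases h1 with h | h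
        · exact absurd hB (hXB v h)
        · exact Or.inl h
      · exact Or.inr h2
    · rintro (h | h)
      · exact ⟨Or.inl (Or.inr h), hYB h⟩
      · exact ⟨Or.inr h, hZB h⟩
  have hI3 : (X ∪ Z) ∩ A = X ∪ Z := by
    apply Finset.ext
    intro v
    simp only [Finset.mem_inter, Finset.mem_union]
    constructor
    · rintro ⟨h, _⟩; exact h
    · rintro (h | h)
      · exact ⟨Or.inl h, hXA h⟩
      · exact ⟨Or.inr h, hZA h⟩
  have hI4 : (X ∪ Z) ∩ Bs = Z := by
    apply Finset.ext
    intro v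
    simp only [Finset.mem_inter, Finset.mem_union]
    constructor
    · rintro ⟨h | h, hB⟩
      · exact absurd hB (hXB v h)
      · exact h
    · intro h
      exact ⟨Or.inr h, hZB h⟩
  have hI5 : (Y ∪ Z) ∩ A = Z := by
    apply Finset.ext
    intro v
    simp only [Finset.mem_inter, Finset.mem_union]
    constructor
    · rintro ⟨h | h, hA⟩
      · exact absurd hA (hYA v h)
      · exact h
    · intro h
      exact ⟨Or.inr h, hZA h⟩
  have hI6 : (Y ∪ Z) ∩ Bs = Y ∪ Z := by
    apply Finset.ext
    intro v
    simp only [Finset.mem_inter, Finset.mem_union]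
    constructor
    · rintro ⟨h, _⟩; exact h
    · rintro (h | h)
      · exact ⟨Or.inl h, hYB h⟩
      · exact ⟨Or.inr h, hZB h⟩
  have hI7 : Z ∩ A = Z := Finset.inter_eq_left.mpr hZA
  have hI8 : Z ∩ Bs = Z := Finset.inter_eq_left.mpr hZB
  -- the four probabilities
  have hZXYZ : Z ⊆ X ∪ Y ∪ Z := Finset.subset_union_right
  have hZXZ : Z ⊆ X ∪ Z := Finset.subset_union_right
  have hZYZ : Z ⊆ Y ∪ Z := Finset.subset_union_right
  have hXZAn : X ∪ Z ⊆ An := fun v hv => hsubAn (by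
    rcases Finset.mem_union.mp hv with h | h
    · exact Finset.mem_union_left _ (Finset.mem_union_left _ h)
    · exact Finset.mem_union_right _ h)
  have hYZAn : Y ∪ Z ⊆ An := fun v hv => hsubAn (by
    rcases Finset.mem_union.mp hv with h | h
    · exact Finset.mem_union_left _ (Finset.mem_union_right _ h)
    · exact Finset.mem_union_right _ h)
  have hZAn : Z ⊆ An := fun v hv => hsubAn (Finset.mem_union_right _ hv)
  have hPabc : probIf μ (fun f => Agrees f X a ∧ Agrees f Y b ∧ Agrees f Z c) =
      alpha (X ∪ Z) * beta (Y ∪ Z) := by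
    rw [probIf_congr (q := fun f => ∀ x ∈ X ∪ Y ∪ Z, f x = d x) (fun f => by
      constructor
      · rintro ⟨h1, h2, h3⟩
        exact (hagree_union f (X ∪ Y) Z).mp
          ⟨(hagree_union f X Y).mp ⟨(hdX f).mp h1, (hdY f).mp h2⟩, (hdZ f).mp h3⟩
      · intro h
        obtain ⟨h12, h3⟩ := (hagree_union f (X ∪ Y) Z).mpr h
        obtain ⟨h1, h2⟩ := (hagree_union f X Y).mpr h12
        exact ⟨(hdX f).mpr h1, (hdY f).mpr h2, (hdZ f).mpr h3⟩)]
    rw [probIf_eq_sum μ (fun f => ∀ x ∈ X ∪ Y ∪ Z, f x = d x)]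
    rw [key (X ∪ Y ∪ Z) hZXYZ hsubAn, hI1, hI2]
  have hPac : probIf μ (fun f => Agrees f X a ∧ Agrees f Z c) =
      alpha (X ∪ Z) * beta Z := by
    rw [probIf_congr (q := fun f => ∀ x ∈ X ∪ Z, f x = d x) (fun f => by
      constructor
      · rintro ⟨h1, h3⟩
        exact (hagree_union f X Z).mp ⟨(hdX f).mp h1, (hdZ f).mp h3⟩
      · intro h
        obtain ⟨h1, h3⟩ := (hagree_union f X Z).mpr h
        exact ⟨(hdX f).mpr h1, (hdZ f).mpr h3⟩)]
    rw [probIf_eq_sum μ (fun f => ∀ x ∈ X ∪ Z, f x = d x)]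
    rw [key (X ∪ Z) hZXZ hXZAn, hI3, hI4]
  have hPbc : probIf μ (fun f => Agrees f Y b ∧ Agrees f Z c) =
      alpha Z * beta (Y ∪ Z) := by
    rw [probIf_congr (q := fun f => ∀ x ∈ Y ∪ Z, f x = d x) (fun f => by
      constructor
      · rintro ⟨h2, h3⟩
        exact (hagree_union f Y Z).mp ⟨(hdY f).mp h2, (hdZ f).mp h3⟩
      · intro h
        obtain ⟨h2, h3⟩ := (hagree_union f Y Z).mpr h
        exact ⟨(hdY f).mpr h2, (hdZ f).mpr h3⟩)]
    rw [probIf_eq_sum μ (fun f => ∀ x ∈ Y ∪ Z, f x = d x)]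
    rw [key (Y ∪ Z) hZYZ hYZAn, hI5, hI6]
  have hPc : probIf μ (fun f => Agrees f Z c) = alpha Z * beta Z := by
    rw [probIf_congr (q := fun f => ∀ x ∈ Z, f x = d x) (fun f => hdZ f)]
    rw [probIf_eq_sum μ (fun f => ∀ x ∈ Z, f x = d x)]
    rw [key Z (le_refl Z) hZAn, hI7, hI8]
  -- conclude
  by_cases h0 : probIf μ (fun f => Agrees f Y b ∧ Agrees f Z c) = 0
  · exact Or.inl h0
  · right
    have hbc_nonneg : 0 ≤ probIf μ (fun f => Agrees f Y b ∧ Agrees f Z c) := by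
      apply Finset.sum_nonneg
      intro f _
      split
      · exact distBN_nonneg B hprod f
      · exact le_refl 0
    have hbc_pos : 0 < probIf μ (fun f => Agrees f Y b ∧ Agrees f Z c) :=
      lt_of_le_of_ne hbc_nonneg (Ne.symm h0)
    have hmono : probIf μ (fun f => Agrees f Y b ∧ Agrees f Z c) ≤
        probIf μ (fun f => Agrees f Z c) := by
      apply Finset.sum_le_sum
      intro f _
      by_cases hcond : Agrees f Y b ∧ Agrees f Z c
      · rw [if_pos hcond, if_pos hcond.2]
      · rw [if_neg hcond]
        split
        · exact distBN_nonneg B hprod f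
        · exact le_refl 0
    have hc_pos : 0 < probIf μ (fun f => Agrees f Z c) := lt_of_lt_of_le hbc_pos hmono
    rw [div_eq_div_iff (ne_of_gt hbc_pos) (ne_of_gt hc_pos)]
    rw [hPabc, hPac, hPbc, hPc]
    ring

/-- For an acyclic GBN `B` whose initial distribution is a product
distribution (a classical BN), `d-sep(G) ⊆ Indep(dist_BN(B))`. -/
theorem stmt1 {V : Type} [Fintype V] [DecidableEq V]
    (B : GBN V) (hacyc : Acyclic B.edges) (hprod : IsProductDist B.ι) :
    DSepSet B.edges ⊆ IndepSet (distBN B) := by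
  rintro ⟨X, Y, Z⟩ ⟨hdisj, hds⟩
  refine ⟨hdisj, ?_⟩
  obtain ⟨hXY, hXZ, hYZ⟩ := hdisj
  exact dsep_indep B hacyc hprod hXY hXZ hYZ hds

end GBNPaper
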